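/- Let H be a finite-dimensional real inner product space, let 𝒰 ⊆ H be a nonempty closed convex set, let R : H → ℝ ∪ {+∞} be a proper lower semicontinuous convex function with dom R ∩ 𝒰 nonempty, and let f : H → ℝ be differentiable with L-Lipschitz gradient for some L > 0. Fix U₀ ∈ 𝒰 and let U' be a minimizer over U ∈ 𝒰 of ⟨∇f(U₀), U⟩ + (L/2)‖U − U₀‖² + R(U). Then f(U') + R(U') + (L/2)‖U' − U₀‖² ≤ f(U₀) + R(U₀). -/

import Mathlib

open scoped RealInnerProductSpace

lemma descent_lemma
    {H : Type*} [NormedAddCommGroup H] [InnerProductSpace ℝ H] [CompleteSpace H]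
    (f : H → ℝ) (f' : H → H) (hf : ∀ x, HasGradientAt f (f' x) x)
    (L : ℝ) (hL : 0 ≤ L)
    (hlip : ∀ x y : H, ‖f' x - f' y‖ ≤ L * ‖x - y‖)
    (x y : H) :
    f y ≤ f x + ⟪f' x, y - x⟫ + L / 2 * ‖y - x‖ ^ 2 := by
  set v := y - x with hv
  have hcont : Continuous f' := by
    have : LipschitzWith (Real.toNNReal L) f' :=
      LipschitzWith.of_dist_le_mul fun a b => by
        rw [dist_eq_norm, dist_eq_norm, Real.coe_toNNReal L hL]; exact hlip a b
    exact this.continuous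
  have hderiv : ∀ t : ℝ, HasDerivAt (fun s : ℝ => f (x + s • v))
      (⟪f' (x + t • v), v⟫) t := by
    intro t
    have h1 : HasDerivAt (fun s : ℝ => x + s • v) v t := by
      simpa using ((hasDerivAt_id t).smul_const v).const_add x
    have h2 := (hf (x + t • v)).hasFDerivAt.comp_hasDerivAt t h1
    simp [InnerProductSpace.toDual] at h2
    exact h2
  have hcontφ : Continuous fun t : ℝ => ⟪f' (x + t • v), v⟫ := by
    exact (Continuous.inner (hcont.comp (by continuity)) continuous_const)
  have hFTC : ∫ t in (0:ℝ)..1, ⟪f' (x + t • v), v⟫ = f (x + (1:ℝ) • v) - f (x + (0:ℝ) • v) := by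
    exact intervalIntegral.integral_eq_sub_of_hasDerivAt
      (fun t _ => hderiv t) (hcontφ.intervalIntegrable 0 1)
  have hbound : ∫ t in (0:ℝ)..1, ⟪f' (x + t • v), v⟫ ≤
      ∫ t in (0:ℝ)..1, (⟪f' x, v⟫ + L * t * ‖v‖ ^ 2) := by
    apply intervalIntegral.integral_mono_on (by norm_num)
      (hcontφ.intervalIntegrable 0 1)
      ((by continuity : Continuous fun t : ℝ => ⟪f' x, v⟫ + L * t * ‖v‖ ^ 2).intervalIntegrable 0 1)
    intro t ht
    have : ⟪f' (x + t • v) - f' x, v⟫ ≤ L * t * ‖v‖ ^ 2 := by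
      calc ⟪f' (x + t • v) - f' x, v⟫ ≤ ‖f' (x + t • v) - f' x‖ * ‖v‖ := real_inner_le_norm _ _
        _ ≤ (L * ‖x + t • v - x‖) * ‖v‖ := by
            gcongr; exact hlip _ _
        _ = L * t * ‖v‖ ^ 2 := by
            rw [add_sub_cancel_left, norm_smul, Real.norm_eq_abs, abs_of_nonneg ht.1]
            ring
    have h2 : ⟪f' (x + t • v), v⟫ = ⟪f' x, v⟫ + ⟪f' (x + t • v) - f' x, v⟫ := by
      rw [← inner_add_left]; congr 1; abel
    linarith
  have hrhs : ∫ t in (0:ℝ)..1, (⟪f' x, v⟫ + L * t * ‖v‖ ^ 2) =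
      ⟪f' x, v⟫ + L / 2 * ‖v‖ ^ 2 := by
    have h1 : Continuous fun _ : ℝ => (⟪f' x, v⟫ : ℝ) := continuous_const
    have h2 : Continuous fun t : ℝ => L * t * ‖v‖ ^ 2 := by continuity
    rw [intervalIntegral.integral_add (h1.intervalIntegrable 0 1) (h2.intervalIntegrable 0 1)]
    have : ∀ t : ℝ, L * t * ‖v‖ ^ 2 = (L * ‖v‖ ^ 2) * t := fun t => by ring
    simp only [this]
    rw [intervalIntegral.integral_const_mul, integral_id]
    simp; ring
  simp only [one_smul, zero_smul, add_zero] at hFTC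
  have : x + v = y := by rw [hv]; abel
  rw [this] at hFTC
  linarith [hFTC ▸ hbound, hrhs ▸ hbound]


/-- descent property of one proximal gradient step for an
`L`-smooth function `f` plus a proper lsc convex extended-real-valued
regularizer `R`, minimized over a nonempty closed convex set `𝒰`. -/
theorem prox_grad_step_descent
    {H : Type*} [NormedAddCommGroup H] [InnerProductSpace ℝ H] [FiniteDimensional ℝ H]
    (𝒰 : Set H) (h𝒰ne : 𝒰.Nonempty) (h𝒰closed : IsClosed 𝒰) (h𝒰convex : Convex ℝ 𝒰)
    (R : H → EReal)
    (hRlsc : LowerSemicontinuous R)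
    (hRnebot : ∀ x, R x ≠ ⊥)
    (hRconvex : ∀ x y : H, ∀ a b : ℝ, 0 ≤ a → 0 ≤ b → a + b = 1 →
      R (a • x + b • y) ≤ (a : EReal) * R x + (b : EReal) * R y)
    (hdom : ∃ x ∈ 𝒰, R x ≠ ⊤)
    (f : H → ℝ) (f' : H → H) (hf : ∀ x, HasGradientAt f (f' x) x)
    (L : ℝ) (hL : 0 < L)
    (hlip : ∀ x y : H, ‖f' x - f' y‖ ≤ L * ‖x - y‖)
    (U₀ : H) (hU₀ : U₀ ∈ 𝒰) (U' : H) (hU'mem : U' ∈ 𝒰)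
    (hmin : ∀ U ∈ 𝒰,
      ((⟪f' U₀, U'⟫ + (L / 2) * ‖U' - U₀‖ ^ 2 : ℝ) : EReal) + R U' ≤
      ((⟪f' U₀, U⟫ + (L / 2) * ‖U - U₀‖ ^ 2 : ℝ) : EReal) + R U) :
    ((f U' + (L / 2) * ‖U' - U₀‖ ^ 2 : ℝ) : EReal) + R U' ≤ ((f U₀ : ℝ) : EReal) + R U₀ := by
  -- R U' is finite
  obtain ⟨z, hz𝒰, hztop⟩ := hdom
  have hU'top : R U' ≠ ⊤ := by
    intro h
    have := hmin z hz𝒰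
    rw [h] at this
    have hlhs : ((⟪f' U₀, U'⟫ + (L / 2) * ‖U' - U₀‖ ^ 2 : ℝ) : EReal) + ⊤ = ⊤ :=
      EReal.add_top_of_ne_bot (EReal.coe_ne_bot _)
    rw [hlhs, top_le_iff] at this
    exact (EReal.add_lt_top (EReal.coe_ne_top _) hztop).ne this
  lift R U' to ℝ using ⟨hU'top, hRnebot U'⟩ with r' hr'
  -- if R U₀ = ⊤, trivial
  by_cases hU₀top : R U₀ = ⊤
  · rw [hU₀top, EReal.add_top_of_ne_bot (EReal.coe_ne_bot _)]
    exact le_top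
  lift R U₀ to ℝ using ⟨hU₀top, hRnebot U₀⟩ with r₀ hr₀
  set g := f' U₀
  set d2 := ‖U' - U₀‖ ^ 2 with hd2
  have hd2nn : 0 ≤ d2 := sq_nonneg _
  -- strong form of optimality: for all t ∈ (0,1]
  have key : ∀ t : ℝ, 0 < t → t ≤ 1 →
      ⟪g, U'⟫ + L / 2 * (2 - t) * d2 + r' ≤ ⟪g, U₀⟫ + r₀ := by
    intro t ht0 ht1
    set Ut := (1 - t) • U' + t • U₀ with hUt
    have hUtmem : Ut ∈ 𝒰 := h𝒰convex hU'mem hU₀ (by linarith) ht0.le (by ring)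
    have hRUt : R Ut ≤ (((1 - t) * r' + t * r₀ : ℝ) : EReal) := by
      have h := hRconvex U' U₀ (1 - t) t (by linarith) ht0.le (by ring)
      simp only [← hr', ← hr₀, ← EReal.coe_mul, ← EReal.coe_add] at h
      exact hUt ▸ h
    have hnorm : ‖Ut - U₀‖ ^ 2 = (1 - t) ^ 2 * d2 := by
      have : Ut - U₀ = (1 - t) • (U' - U₀) := by
        rw [hUt]; rw [smul_sub]; module
      rw [this, norm_smul, mul_pow, Real.norm_eq_abs, sq_abs, hd2]
    have h1 := (hmin Ut hUtmem).trans (add_le_add_right hRUt _)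
    simp only [← hr', ← EReal.coe_add] at h1
    rw [EReal.coe_le_coe_iff] at h1
    have hinner : ⟪g, Ut⟫ = (1 - t) * ⟪g, U'⟫ + t * ⟪g, U₀⟫ := by
      rw [hUt, inner_add_right, real_inner_smul_right, real_inner_smul_right]
    rw [hnorm, hinner] at h1
    -- h1 : ⟪g,U'⟫ + L/2 * d2 + r' ≤ (1-t)⟪g,U'⟫ + t⟪g,U₀⟫ + L/2*(1-t)^2*d2 + ((1-t)r' + t r₀)
    have hLd : 0 ≤ L / 2 * d2 := by positivity
    nlinarith [mul_pos ht0 (half_pos hL), sq_nonneg (1 - t)]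
  -- limit t → 0
  have strong : ⟪g, U'⟫ + L * d2 + r' ≤ ⟪g, U₀⟫ + r₀ := by
    apply le_of_forall_pos_le_add
    intro ε hε
    set t := min 1 (ε / (L / 2 * d2 + 1)) with htdef
    have hden : 0 < L / 2 * d2 + 1 := by positivity
    have ht0 : 0 < t := lt_min one_pos (div_pos hε hden)
    have ht1 : t ≤ 1 := min_le_left _ _
    have := key t ht0 ht1
    have htle : L / 2 * t * d2 ≤ ε := by
      have h2 : t ≤ ε / (L / 2 * d2 + 1) := min_le_right _ _
      have : L / 2 * t * d2 ≤ (ε / (L / 2 * d2 + 1)) * (L / 2 * d2 + 1) := by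
        calc L / 2 * t * d2 = t * (L / 2 * d2) := by ring
          _ ≤ (ε / (L / 2 * d2 + 1)) * (L / 2 * d2 + 1) := by
              apply mul_le_mul h2 (by linarith) (by positivity) (by positivity)
      rwa [div_mul_cancel₀ ε (ne_of_gt hden)] at this
    nlinarith
  -- descent lemma
  have hdesc := descent_lemma f f' hf L hL.le hlip U₀ U'
  simp only [← hr', ← hr₀, ← EReal.coe_add]
  rw [EReal.coe_le_coe_iff]
  have : ⟪g, U' - U₀⟫ = ⟪g, U'⟫ - ⟪g, U₀⟫ := by rw [inner_sub_right]
  rw [this] at hdesc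
  nlinarith
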